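/- Let A be a commutative unital C*-algebra and let τ₁, …, τₙ be elements of the standard Hilbert C*-module A^d (with A-valued inner product ⟨x,y⟩ = Σᵣ xᵣ yᵣ*) such that ⟨τⱼ, τⱼ⟩ = 1 for all j, where n ≥ d. Then for every natural number m ≥ 1, the element Σⱼ Σₖ ⟨τⱼ, τₖ⟩^m ⟨τₖ, τⱼ⟩^m − (n²/C(d+m-1,m))·1 is a positive element of A. -/

import Mathlib

/-- The standard `A`-valued inner product on the standard Hilbert C*-module `A^d`
over a commutative C*-algebra `A`: `⟨x,y⟩ = ∑ r, x r * (y r)*`. -/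
def stdInner {A : Type*} [NormedCommRing A] [StarRing A] {d : ℕ}
    (x y : Fin d → A) : A :=
  ∑ r, x r * star (y r)


lemma sum_comm₄ {M ι κ : Type*} [AddCommMonoid M] [Fintype ι] [Fintype κ]
    (F : ι → ι → κ → κ → M) :
    ∑ j, ∑ k, ∑ σ, ∑ τ, F j k σ τ = ∑ σ, ∑ τ, ∑ j, ∑ k, F j k σ τ := by
  have h1 : ∀ j : ι, ∑ k : ι, ∑ σ : κ, ∑ τ : κ, F j k σ τ
      = ∑ σ : κ, ∑ k : ι, ∑ τ : κ, F j k σ τ := fun j => Finset.sum_comm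
  simp_rw [h1]
  rw [Finset.sum_comm]
  refine Finset.sum_congr rfl fun σ _ => ?_
  have h2 : ∀ j : ι, ∑ k : ι, ∑ τ : κ, F j k σ τ
      = ∑ τ : κ, ∑ k : ι, F j k σ τ := fun j => Finset.sum_comm
  simp_rw [h2]
  exact Finset.sum_comm

open Finset in
lemma welch_complex {d n m : ℕ} (v : Fin n → Fin d → ℂ)
    (hv : ∀ j, ∑ r, v j r * star (v j r) = 1) :
    ∃ t : ℝ, 0 ≤ t ∧
      (∑ j, ∑ k, (∑ r, v j r * star (v k r)) ^ m * (∑ r, v k r * star (v j r)) ^ m)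
        - ((n : ℂ) ^ 2 / ((d + m - 1).choose m : ℂ)) = (t : ℂ) := by
  classical
  set u : Fin n → Sym (Fin d) m → ℂ := fun j σ => (σ.1.map (v j)).prod with hu
  set c : Sym (Fin d) m → ℝ := fun σ => σ.1.countPerms with hc
  set N : Sym (Fin d) m → Sym (Fin d) m → ℂ := fun σ τ => ∑ j, u j σ * star (u j τ) with hN
  have hstarprod : ∀ (k : Fin n) (σ : Sym (Fin d) m),
      (σ.1.map fun r => star (v k r)).prod = star (u k σ) := by
    intro k σ
    rw [hu]
    simp only
    rw [Complex.star_def, map_multiset_prod (starRingEnd ℂ), Multiset.map_map]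
    rfl
  have hexp : ∀ j k, (∑ r, v j r * star (v k r)) ^ m
      = ∑ σ : Sym (Fin d) m, (c σ : ℂ) * (u j σ * star (u k σ)) := by
    intro j k
    have h := Finset.sum_pow (s := (univ : Finset (Fin d))) (fun r => v j r * star (v k r)) m
    rw [Finset.sym_univ] at h
    rw [h]
    refine Finset.sum_congr rfl fun σ _ => ?_
    rw [Multiset.prod_map_mul, hstarprod]
    push_cast [hc]
    ring
  set T : Fin n → Fin n → ℂ := fun j k => ∑ r, v j r * star (v k r) with hT
  have hstep : ∀ σ τ : Sym (Fin d) m,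
      (∑ j, ∑ k, ((c σ : ℂ) * (u j σ * star (u k σ))) * ((c τ : ℂ) * (u k τ * star (u j τ))))
        = ((c σ : ℂ) * (c τ : ℂ)) * (N σ τ * star (N σ τ)) := by
    intro σ τ
    rw [hN]
    simp only [star_sum, star_mul', star_star]
    rw [Finset.sum_mul_sum, Finset.mul_sum]
    refine Finset.sum_congr rfl fun j _ => ?_
    rw [Finset.mul_sum]
    refine Finset.sum_congr rfl fun k _ => ?_
    ring
  have hZ : (∑ j, ∑ k, T j k ^ m * T k j ^ m)
      = ∑ σ : Sym (Fin d) m, ∑ τ : Sym (Fin d) m,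
          ((c σ : ℂ) * (c τ : ℂ)) * (N σ τ * star (N σ τ)) := by
    calc (∑ j, ∑ k, T j k ^ m * T k j ^ m)
        = ∑ j, ∑ k, ∑ σ : Sym (Fin d) m, ∑ τ : Sym (Fin d) m,
            ((c σ : ℂ) * (u j σ * star (u k σ))) * ((c τ : ℂ) * (u k τ * star (u j τ))) := by
          refine Finset.sum_congr rfl fun j _ => Finset.sum_congr rfl fun k _ => ?_
          rw [hT]; simp only [hexp j k, hexp k j, Finset.sum_mul_sum]
      _ = ∑ σ : Sym (Fin d) m, ∑ τ : Sym (Fin d) m, ∑ j, ∑ k,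
            ((c σ : ℂ) * (u j σ * star (u k σ))) * ((c τ : ℂ) * (u k τ * star (u j τ))) :=
          sum_comm₄ _
      _ = _ := Finset.sum_congr rfl fun σ _ => Finset.sum_congr rfl fun τ _ => hstep σ τ
  set R : ℝ := ∑ σ : Sym (Fin d) m, ∑ τ : Sym (Fin d) m,
      (c σ * c τ) * Complex.normSq (N σ τ) with hR
  have hZR : (∑ σ : Sym (Fin d) m, ∑ τ : Sym (Fin d) m,
      ((c σ : ℂ) * (c τ : ℂ)) * (N σ τ * star (N σ τ))) = (R : ℂ) := by
    rw [hR]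
    push_cast
    refine Finset.sum_congr rfl fun σ _ => Finset.sum_congr rfl fun τ _ => ?_
    rw [Complex.star_def, Complex.mul_conj]
  set g : Sym (Fin d) m → ℝ := fun σ => ∑ j, Complex.normSq (u j σ) with hg
  have hNg : ∀ σ, N σ σ = (g σ : ℂ) := by
    intro σ
    rw [hN, hg]
    push_cast
    refine Finset.sum_congr rfl fun j _ => ?_
    rw [Complex.star_def, Complex.mul_conj]
  have htrC : ∑ σ : Sym (Fin d) m, (c σ : ℂ) * N σ σ = (n : ℂ) := by
    calc ∑ σ : Sym (Fin d) m, (c σ : ℂ) * N σ σ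
        = ∑ σ : Sym (Fin d) m, ∑ j, (c σ : ℂ) * (u j σ * star (u j σ)) := by
          refine Finset.sum_congr rfl fun σ _ => ?_
          rw [hN, Finset.mul_sum]
      _ = ∑ j, ∑ σ : Sym (Fin d) m, (c σ : ℂ) * (u j σ * star (u j σ)) := Finset.sum_comm
      _ = ∑ j : Fin n, (1 : ℂ) := by
          refine Finset.sum_congr rfl fun j _ => ?_
          rw [← hexp j j, hv j, one_pow]
      _ = (n : ℂ) := by simp
  have htr : ∑ σ : Sym (Fin d) m, c σ * g σ = (n : ℝ) := by
    have h : ((∑ σ : Sym (Fin d) m, c σ * g σ : ℝ) : ℂ) = ((n : ℝ) : ℂ) := by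
      push_cast
      rw [← htrC]
      refine Finset.sum_congr rfl fun σ _ => ?_
      rw [hNg σ]
    exact_mod_cast h
  have hc0 : ∀ σ, 0 ≤ c σ := fun σ => by rw [hc]; positivity
  have hg0 : ∀ σ, 0 ≤ g σ := fun σ => Finset.sum_nonneg fun j _ => Complex.normSq_nonneg _
  have hdiag : ∑ σ : Sym (Fin d) m, (c σ * g σ) ^ 2 ≤ R := by
    rw [hR]
    refine Finset.sum_le_sum fun σ _ => ?_
    calc (c σ * g σ) ^ 2 = (c σ * c σ) * Complex.normSq (N σ σ) := by
          rw [hNg σ, Complex.normSq_ofReal]; ring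
      _ ≤ ∑ τ : Sym (Fin d) m, (c σ * c τ) * Complex.normSq (N σ τ) := by
          refine Finset.single_le_sum (f := fun τ => (c σ * c τ) * Complex.normSq (N σ τ))
            (fun τ _ => mul_nonneg (mul_nonneg (hc0 σ) (hc0 τ)) (Complex.normSq_nonneg _)) (Finset.mem_univ σ)
  have hR0 : 0 ≤ R := by
    rw [hR]
    refine Finset.sum_nonneg fun σ _ => Finset.sum_nonneg fun τ _ => mul_nonneg (mul_nonneg (hc0 σ) (hc0 τ)) (Complex.normSq_nonneg _)
  have hcard : (Fintype.card (Sym (Fin d) m) : ℝ) = ((d + m - 1).choose m : ℝ) := by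
    rw [Sym.card_sym_eq_choose, Fintype.card_fin]
  have hCS : (n : ℝ) ^ 2 ≤ ((d + m - 1).choose m : ℝ) * R := by
    calc (n : ℝ) ^ 2 = (∑ σ : Sym (Fin d) m, c σ * g σ) ^ 2 := by rw [htr]
      _ ≤ (Finset.univ.card : ℝ) * ∑ σ : Sym (Fin d) m, (c σ * g σ) ^ 2 :=
          sq_sum_le_card_mul_sum_sq
      _ ≤ ((d + m - 1).choose m : ℝ) * R := by
          rw [Finset.card_univ, hcard]
          exact mul_le_mul_of_nonneg_left hdiag (by positivity)
  refine ⟨R - (n : ℝ) ^ 2 / ((d + m - 1).choose m : ℝ), ?_, ?_⟩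
  · rcases Nat.eq_zero_or_pos ((d + m - 1).choose m) with h0 | hpos
    · have hn : (n : ℝ) ^ 2 ≤ 0 := by simpa [h0] using hCS
      have hn' : (n : ℝ) = 0 := by nlinarith [sq_nonneg (n : ℝ)]
      simp [hn', h0, hR0]
    · have : (n : ℝ) ^ 2 / ((d + m - 1).choose m : ℝ) ≤ R := by
        rw [div_le_iff₀ (by exact_mod_cast hpos)]
        linarith [hCS]
      linarith
  · rw [hZ, hZR]
    push_cast
    ring

/-- **Modular Welch bound (positivity form).** In the standard Hilbert C*-module `A^d` over a
commutative unital C*-algebra `A`, for unit inner product vectors `τ₁,…,τₙ` (`n ≥ d`) and `m ≥ 1`,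
`∑ⱼ∑ₖ ⟨τⱼ,τₖ⟩^m ⟨τₖ,τⱼ⟩^m − (n²/C(d+m-1,m))·1` is a positive element of `A`. -/
theorem modular_welch_bound_positive {A : Type*} [NormedCommRing A] [StarRing A]
    [CStarRing A] [NormedAlgebra ℂ A] [StarModule ℂ A] [CompleteSpace A]
    {d n : ℕ} (hdn : d ≤ n) (τ : Fin n → Fin d → A)
    (hτ : ∀ j, stdInner (τ j) (τ j) = 1) (m : ℕ) (hm : 1 ≤ m) :
    ∃ b : A,
      (∑ j, ∑ k, (stdInner (τ j) (τ k)) ^ m * (stdInner (τ k) (τ j)) ^ m) -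
        (((n : ℂ) ^ 2 / ((d + m - 1).choose m : ℂ)) • (1 : A)) = star b * b := by
  classical
  letI : CStarAlgebra A := { toNormedRing := inferInstance, toStarRing := inferInstance, toCompleteSpace := inferInstance, toCStarRing := inferInstance, toNormedAlgebra := inferInstance, toStarModule := inferInstance }
  letI : PartialOrder A := CStarAlgebra.spectralOrder A
  letI : StarOrderedRing A := CStarAlgebra.spectralOrderedRing A
  set S : A := (∑ j, ∑ k, (stdInner (τ j) (τ k)) ^ m * (stdInner (τ k) (τ j)) ^ m) -
      (((n : ℂ) ^ 2 / ((d + m - 1).choose m : ℂ)) • (1 : A)) with hS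
  have hsym : ∀ x y : Fin d → A, star (stdInner x y) = stdInner y x := by
    intro x y
    rw [stdInner, stdInner, star_sum]
    exact Finset.sum_congr rfl fun r _ => by rw [star_mul', star_star, mul_comm]
  have hconst : star ((n : ℂ) ^ 2 / ((d + m - 1).choose m : ℂ))
      = (n : ℂ) ^ 2 / ((d + m - 1).choose m : ℂ) := by
    rw [star_div₀, star_pow]
    norm_cast
  have hSA : IsSelfAdjoint S := by
    rw [IsSelfAdjoint, hS, star_sub, star_smul, star_one]
    congr 1
    · rw [star_sum]
      refine Finset.sum_congr rfl fun j _ => ?_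
      rw [star_sum]
      refine Finset.sum_congr rfl fun k _ => ?_
      rw [star_mul', star_pow, star_pow, hsym, hsym, mul_comm]
    · rw [hconst]
  have hpos : 0 ≤ S := by
    rw [StarOrderedRing.nonneg_iff_spectrum_nonneg (R := ℝ) S hSA]
    intro x hx
    have hx' : algebraMap ℝ ℂ x ∈ spectrum ℂ S := spectrum.algebraMap_mem ℂ hx
    rw [WeakDual.CharacterSpace.mem_spectrum_iff_exists] at hx'
    obtain ⟨φ, hφ⟩ := hx'
    have hφinner : ∀ x y : Fin d → A, φ (stdInner x y) = ∑ r, φ (x r) * star (φ (y r)) := by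
      intro x y
      rw [stdInner, map_sum]
      exact Finset.sum_congr rfl fun r _ => by rw [map_mul, map_star]
    obtain ⟨t, ht0, hts⟩ := welch_complex (d := d) (m := m) (fun j r => φ (τ j r))
      (fun j => by rw [← hφinner (τ j) (τ j), hτ j, map_one])
    have hφS : φ S = (t : ℂ) := by
      rw [hS, map_sub, ← Algebra.algebraMap_eq_smul_one, AlgHomClass.commutes, ← hts]
      congr 1
      rw [map_sum]
      refine Finset.sum_congr rfl fun j _ => ?_
      rw [map_sum]
      refine Finset.sum_congr rfl fun k _ => ?_
      rw [map_mul, map_pow, map_pow, hφinner, hφinner]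
    have hxt : x = t := by
      have : ((x : ℂ)) = (t : ℂ) := by
        rw [← hφS, hφ]
        rfl
      exact_mod_cast this
    rw [hxt]; exact ht0
  exact ⟨CFC.sqrt S, by
    rw [(IsSelfAdjoint.of_nonneg (CFC.sqrt_nonneg S)).star_eq,
      CFC.sqrt_mul_sqrt_self S hpos]⟩
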